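/- Let F₀ = {f_k : k ∈ ℕ} be a family of functions ℕ → ℕ and let f : ℕ → ℕ be eventually different from every f_k. Suppose h* : ℕ → ℕ satisfies that N = {n : h*(n) = f(n)} is infinite, and g* : ℕ → ℕ is increasing with g*(k) ≥ m_k for all k, where m_k is least so that f(n) ∉ {f_0(n),…,f_k(n)} for all n ≥ m_k. Define h(n) = h*(n) if h*(n) ∉ {f_0(n),…,f_k(n)} (where k is such that g*(k) ≤ n < g*(k+1)), and h(n) = min(ℕ \ {f_0(n),…,f_k(n)}) otherwise. Then h is eventually different from each f_k, and h agrees with f on all of N (hence h is not eventually different from f). -/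
import Mathlib


def EvDiff (f g : ℕ → ℕ) : Prop := ∃ n : ℕ, ∀ m : ℕ, n ≤ m → f m ≠ g m

lemma exists_interval (gs : ℕ → ℕ) (hg0 : gs 0 = 0) (hgmono : StrictMono gs) (n : ℕ) :
    ∃ k, gs k ≤ n ∧ n < gs (k + 1) := by
  classical
  have hne : ∃ k, n < gs (k + 1) :=
    ⟨n, lt_of_lt_of_le (Nat.lt_succ_self n) hgmono.le_apply⟩
  refine ⟨Nat.find hne, ?_, Nat.find_spec hne⟩
  rcases Nat.eq_zero_or_pos (Nat.find hne) with h0 | hpos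
  · rw [h0, hg0]; exact Nat.zero_le n
  · have h1 := Nat.find_min hne (Nat.pred_lt hpos.ne')
    have hk : Nat.find hne - 1 + 1 = Nat.find hne := Nat.succ_pred_eq_of_pos hpos
    rw [Nat.pred_eq_sub_one, hk] at h1
    omega

theorem stmt3 (F : ℕ → ℕ → ℕ) (f hs gs m h : ℕ → ℕ)
    (hED : ∀ k, EvDiff f (F k))
    (hm : ∀ k n, m k ≤ n → ∀ j, j ≤ k → f n ≠ F j n)
    (hminj : Function.Injective m)
    (hN : {n : ℕ | hs n = f n}.Infinite)
    (hg0 : gs 0 = 0) (hgmono : StrictMono gs) (hgm : ∀ k, m k ≤ gs k)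
    (hh : ∀ n k, gs k ≤ n → n < gs (k + 1) →
      ((∀ j, j ≤ k → hs n ≠ F j n) → h n = hs n) ∧
      (¬ (∀ j, j ≤ k → hs n ≠ F j n) →
        h n = sInf {v : ℕ | ∀ j, j ≤ k → v ≠ F j n})) :
    (∀ k, EvDiff h (F k)) ∧ (∀ n, hs n = f n → h n = f n) ∧ ¬ EvDiff h f := by
  have hex := exists_interval gs hg0 hgmono
  have part2 : ∀ n, hs n = f n → h n = f n := by
    intro n hfn
    obtain ⟨k', hk1, hk2⟩ := hex n
    have hc : ∀ j, j ≤ k' → hs n ≠ F j n := by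
      intro j hj
      rw [hfn]; exact hm k' n (le_trans (hgm k') hk1) j hj
    rw [(hh n k' hk1 hk2).1 hc, hfn]
  refine ⟨?_, part2, ?_⟩
  · intro k
    refine ⟨gs k, fun n hn => ?_⟩
    obtain ⟨k', hk1, hk2⟩ := hex n
    have hkk : k ≤ k' := by
      by_contra hlt
      push_neg at hlt
      have : gs (k' + 1) ≤ gs k := hgmono.monotone hlt
      omega
    have hhn := hh n k' hk1 hk2
    by_cases hc : ∀ j, j ≤ k' → hs n ≠ F j n
    · rw [hhn.1 hc]; exact hc k hkk
    · rw [hhn.2 hc]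
      have hfn : f n ∈ {v : ℕ | ∀ j, j ≤ k' → v ≠ F j n} :=
        fun j hj => hm k' n (le_trans (hgm k') hk1) j hj
      exact Nat.sInf_mem (s := {v : ℕ | ∀ j, j ≤ k' → v ≠ F j n}) ⟨f n, hfn⟩ k hkk
  · rintro ⟨N, hN'⟩
    obtain ⟨n, hn1, hn2⟩ := hN.exists_gt N
    exact hN' n hn2.le (part2 n hn1)
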